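/- Let f: R^d → R be self-concordant with minimizer x_*, H_* = ∇²f(x_*), and let B ∈ R^{d×d} be symmetric. If ‖x − x_*‖_* < 1, then ‖(B − H_*⁻¹)∇f(x)‖_* ≤ (1/2)‖B − H_*⁻¹‖²_{F(H_*)} + (1/2)·‖x − x_*‖_*²/(1 − ‖x − x_*‖_*)². -/

import Mathlib

open Matrix MeasureTheory Filter
open scoped Classical

noncomputable section

/-- Vectors in `ℝ^d` with the Euclidean (2-)norm. -/
abbrev Vec (d : ℕ) := EuclideanSpace ℝ (Fin d)

/-- Matrix square root of a positive semidefinite matrix (junk value `0` otherwise). -/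
noncomputable def msqrt {d : ℕ} (M : Matrix (Fin d) (Fin d) ℝ) : Matrix (Fin d) (Fin d) ℝ :=
  if h : M.PosSemidef then
    (h.1.eigenvectorUnitary : Matrix (Fin d) (Fin d) ℝ) *
      diagonal ((↑) ∘ Real.sqrt ∘ h.1.eigenvalues) *
      (star (h.1.eigenvectorUnitary : Matrix (Fin d) (Fin d) ℝ)) else 0

/-- Frobenius norm of a square matrix. -/
noncomputable def frobNorm {d : ℕ} (M : Matrix (Fin d) (Fin d) ℝ) : ℝ :=
  Real.sqrt (Matrix.trace (Mᵀ * M))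

/-- Weighted Frobenius norm `‖W‖_{F(H)} = ‖H^{1/2} W H^{1/2}‖_F`. -/
noncomputable def wFrob {d : ℕ} (H W : Matrix (Fin d) (Fin d) ℝ) : ℝ :=
  frobNorm (msqrt H * W * msqrt H)

/-- Local norm `‖v‖_H = √⟨H v, v⟩`. -/
noncomputable def localNorm {d : ℕ} (H : Matrix (Fin d) (Fin d) ℝ) (v : Vec d) : ℝ :=
  Real.sqrt (inner ℝ (Matrix.toEuclideanLin H v) v : ℝ)

/-- `f` is self-concordant, expressed through its Hessian map `Hf`:
the Hessian is everywhere positive definite and the local norms at nearby points are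
comparable. -/
def SelfConcordant {d : ℕ} (Hf : Vec d → Matrix (Fin d) (Fin d) ℝ) : Prop :=
  (∀ x, (Hf x).PosDef) ∧
  ∀ x y v : Vec d, localNorm (Hf x) (y - x) < 1 → v ≠ 0 →
    1 - localNorm (Hf x) (y - x) ≤ localNorm (Hf y) v / localNorm (Hf x) v ∧
      localNorm (Hf y) v / localNorm (Hf x) v ≤ 1 / (1 - localNorm (Hf x) (y - x))

/-- `g` is the gradient of `f` and `Hf` is its Hessian (the derivative of the gradient). -/
def IsGradHess {d : ℕ} (f : Vec d → ℝ) (g : Vec d → Vec d)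
    (Hf : Vec d → Matrix (Fin d) (Fin d) ℝ) : Prop :=
  (∀ x, HasGradientAt f (g x) x) ∧
  ∀ x, HasFDerivAt g (Matrix.toEuclideanCLM (𝕜 := ℝ) (Hf x) : Vec d →L[ℝ] Vec d) x

/-- Smallest eigenvalue of a symmetric matrix, via the Rayleigh quotient. -/
noncomputable def lambdaMin {d : ℕ} (M : Matrix (Fin d) (Fin d) ℝ) : ℝ :=
  ⨅ v : {v : Vec d // ‖v‖ = 1}, (inner ℝ (Matrix.toEuclideanLin M v.1) v.1 : ℝ)

/-- Entrywise expectation of a random matrix. -/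
noncomputable def expMat {Ω : Type*} [MeasurableSpace Ω] (μ : Measure Ω)
    {m n : ℕ} (M : Ω → Matrix (Fin m) (Fin n) ℝ) : Matrix (Fin m) (Fin n) ℝ :=
  Matrix.of fun i j => ∫ ω, M ω i j ∂μ

/-- The projection matrix `Z = H^{1/2} S (Sᵀ H S)⁻¹ Sᵀ H^{1/2}`. -/
noncomputable def sketchProj {d τ : ℕ} (H : Matrix (Fin d) (Fin d) ℝ)
    (S : Matrix (Fin d) (Fin τ) ℝ) : Matrix (Fin d) (Fin d) ℝ :=
  msqrt H * S * (Sᵀ * H * S)⁻¹ * Sᵀ * msqrt H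

/-- The (randomized) BFGS update
`BFGS(B, H, S) = G + (I - G H) B (I - H G)` with `G = S (Sᵀ H S)⁻¹ Sᵀ`. -/
noncomputable def bfgsUpdate {d τ : ℕ} (B H : Matrix (Fin d) (Fin d) ℝ)
    (S : Matrix (Fin d) (Fin τ) ℝ) : Matrix (Fin d) (Fin d) ℝ :=
  S * (Sᵀ * H * S)⁻¹ * Sᵀ +
    (1 - S * (Sᵀ * H * S)⁻¹ * Sᵀ * H) * B * (1 - H * (S * (Sᵀ * H * S)⁻¹ * Sᵀ))

/-- Spectral (operator 2-)norm of a matrix. -/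
noncomputable def opNorm2 {d : ℕ} (M : Matrix (Fin d) (Fin d) ℝ) : ℝ :=
  ‖(Matrix.toEuclideanCLM (𝕜 := ℝ) M : Vec d →L[ℝ] Vec d)‖

instance matrixMeasurableSpace {m n : Type*} : MeasurableSpace (Matrix m n ℝ) :=
  MeasurableSpace.pi

/-- The sketching matrices `S k` are i.i.d. samples from a common distribution `D`. -/
def IIDSketch {d τ : ℕ} {Ω : Type*} [MeasurableSpace Ω] (μ : Measure Ω)
    (S : ℕ → Ω → Matrix (Fin d) (Fin τ) ℝ) : Prop :=
  (∀ k, Measurable (S k)) ∧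
  ProbabilityTheory.iIndepFun (m := fun _ => matrixMeasurableSpace) S μ ∧
  ∀ k, Measure.map (S k) μ = Measure.map (S 0) μ

end


open scoped RealInnerProductSpace InnerProductSpace

section AuxQN

variable {d : ℕ}

lemma msqrt_mul_self {H : Matrix (Fin d) (Fin d) ℝ} (h : H.PosSemidef) :
    msqrt H * msqrt H = H := by
  rw [msqrt, dif_pos h]
  have hU : star (h.1.eigenvectorUnitary : Matrix (Fin d) (Fin d) ℝ) *
      (h.1.eigenvectorUnitary : Matrix (Fin d) (Fin d) ℝ) = 1 := Unitary.coe_star_mul_self _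
  conv_rhs => rw [h.1.spectral_theorem, Unitary.conjStarAlgAut_apply]
  calc _ = (h.1.eigenvectorUnitary : Matrix (Fin d) (Fin d) ℝ) *
        (diagonal ((↑) ∘ Real.sqrt ∘ h.1.eigenvalues) *
          (star (h.1.eigenvectorUnitary : Matrix (Fin d) (Fin d) ℝ) *
            (h.1.eigenvectorUnitary : Matrix (Fin d) (Fin d) ℝ)) *
          diagonal ((↑) ∘ Real.sqrt ∘ h.1.eigenvalues)) *
        star (h.1.eigenvectorUnitary : Matrix (Fin d) (Fin d) ℝ) := by
        simp only [Matrix.mul_assoc]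
    _ = _ := by
        rw [hU, Matrix.mul_one, diagonal_mul_diagonal]
        congr 3
        funext i
        simp [Real.mul_self_sqrt (h.eigenvalues_nonneg i)]

lemma msqrt_posSemidef {H : Matrix (Fin d) (Fin d) ℝ} (h : H.PosSemidef) :
    (msqrt H).PosSemidef := by
  rw [msqrt, dif_pos h]
  exact (posSemidef_diagonal_iff.mpr fun i => Real.sqrt_nonneg _).mul_mul_conjTranspose_same _

lemma msqrt_isHermitian {H : Matrix (Fin d) (Fin d) ℝ} (h : H.PosSemidef) :
    (msqrt H).IsHermitian := (msqrt_posSemidef h).1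

lemma msqrt_isUnit_det {H : Matrix (Fin d) (Fin d) ℝ} (h : H.PosDef) :
    IsUnit (msqrt H).det := by
  have h1 : (msqrt H).det * (msqrt H).det = H.det := by
    rw [← Matrix.det_mul, msqrt_mul_self h.posSemidef]
  have h2 : 0 < H.det := h.det_pos
  have h3 : (msqrt H).det ≠ 0 := by intro h0; rw [h0, mul_zero] at h1; linarith
  exact isUnit_iff_ne_zero.mpr h3

lemma clm_mul (A B : Matrix (Fin d) (Fin d) ℝ) (v : Vec d) :
    Matrix.toEuclideanCLM (𝕜 := ℝ) (A * B) v
      = Matrix.toEuclideanCLM (𝕜 := ℝ) A (Matrix.toEuclideanCLM (𝕜 := ℝ) B v) := by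
  rw [_root_.map_mul]; rfl

lemma clm_apply_eq_lin (A : Matrix (Fin d) (Fin d) ℝ) (v : Vec d) :
    (Matrix.toEuclideanCLM (𝕜 := ℝ) A) v = Matrix.toEuclideanLin A v := by
  have h := Matrix.coe_toEuclideanCLM_eq_toEuclideanLin (𝕜 := ℝ) A
  exact DFunLike.congr_fun h v

lemma clm_inner_symm {A : Matrix (Fin d) (Fin d) ℝ} (hA : A.IsHermitian) (x y : Vec d) :
    ⟪(Matrix.toEuclideanCLM (𝕜 := ℝ) A) x, y⟫_ℝ = ⟪x, (Matrix.toEuclideanCLM (𝕜 := ℝ) A) y⟫_ℝ := by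
  rw [clm_apply_eq_lin, clm_apply_eq_lin]
  have h := Matrix.toEuclideanLin_conjTranspose_eq_adjoint A
  rw [hA.eq] at h
  conv_lhs => rw [h]
  exact LinearMap.adjoint_inner_left (Matrix.toEuclideanLin A) y x



lemma localNorm_eq_norm {H : Matrix (Fin d) (Fin d) ℝ} (h : H.PosSemidef) (v : Vec d) :
    localNorm H v = ‖Matrix.toEuclideanCLM (𝕜 := ℝ) (msqrt H) v‖ := by
  rw [localNorm, ← clm_apply_eq_lin]
  conv_lhs => rw [← msqrt_mul_self h]
  rw [clm_mul, clm_inner_symm (msqrt_isHermitian h), real_inner_self_eq_norm_sq]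
  exact Real.sqrt_sq (norm_nonneg _)

lemma localNorm_nonneg (H : Matrix (Fin d) (Fin d) ℝ) (v : Vec d) : 0 ≤ localNorm H v :=
  Real.sqrt_nonneg _

lemma localNorm_zero (H : Matrix (Fin d) (Fin d) ℝ) : localNorm H 0 = 0 := by
  simp [localNorm]

lemma localNorm_smul {H : Matrix (Fin d) (Fin d) ℝ} (h : H.PosSemidef) (c : ℝ) (v : Vec d) :
    localNorm H (c • v) = |c| * localNorm H v := by
  rw [localNorm_eq_norm h, localNorm_eq_norm h, _root_.map_smul, norm_smul, Real.norm_eq_abs]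

lemma localNorm_pos {H : Matrix (Fin d) (Fin d) ℝ} (h : H.PosDef) {v : Vec d} (hv : v ≠ 0) :
    0 < localNorm H v := by
  rw [localNorm_eq_norm h.posSemidef]
  rw [norm_pos_iff]
  intro h0
  apply hv
  have h1 := congrArg (Matrix.toEuclideanCLM (𝕜 := ℝ) (msqrt H)⁻¹) h0
  rw [← clm_mul, Matrix.nonsing_inv_mul _ (msqrt_isUnit_det h), _root_.map_one,
    ContinuousLinearMap.one_apply, map_zero] at h1
  exact h1

lemma inner_H_CS {H : Matrix (Fin d) (Fin d) ℝ} (h : H.PosSemidef) (u w : Vec d) :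
    ⟪(Matrix.toEuclideanCLM (𝕜 := ℝ) H) u, w⟫_ℝ ≤ localNorm H u * localNorm H w := by
  conv_lhs => rw [← msqrt_mul_self h, clm_mul, clm_inner_symm (msqrt_isHermitian h)]
  rw [localNorm_eq_norm h, localNorm_eq_norm h]
  exact real_inner_le_norm _ _

lemma norm_le_of_inner_le {w : Vec d} {c : ℝ} (hc : 0 ≤ c)
    (h : ∀ z : Vec d, ⟪w, z⟫_ℝ ≤ c * ‖z‖) : ‖w‖ ≤ c := by
  rcases eq_or_ne w 0 with rfl | h0
  · simpa using hc
  · have h1 := h w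
    rw [real_inner_self_eq_norm_sq] at h1
    have hw : 0 < ‖w‖ := norm_pos_iff.mpr h0
    nlinarith

lemma trace_eq_sum_sq (M : Matrix (Fin d) (Fin d) ℝ) :
    Matrix.trace (Mᵀ * M) = ∑ j, ∑ i, (M i j)^2 := by
  simp [Matrix.trace, Matrix.diag, Matrix.mul_apply, sq]

lemma clm_apply_coord (M : Matrix (Fin d) (Fin d) ℝ) (v : Vec d) (i : Fin d) :
    (Matrix.toEuclideanCLM (𝕜 := ℝ) M v) i = ∑ j, M i j * v j := by
  have h := Matrix.ofLp_toEuclideanCLM (𝕜 := ℝ) M v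
  have h2 := congrFun h i
  simpa [Matrix.mulVec, dotProduct] using h2

lemma norm_sq_coord (w : Vec d) : ‖w‖^2 = ∑ i, (w i)^2 := by
  rw [← real_inner_self_eq_norm_sq]
  simp only [PiLp.inner_apply, RCLike.inner_apply, conj_trivial, sq]

lemma clm_apply_norm_le_frob (M : Matrix (Fin d) (Fin d) ℝ) (v : Vec d) :
    ‖Matrix.toEuclideanCLM (𝕜 := ℝ) M v‖ ≤ frobNorm M * ‖v‖ := by
  have htr : Matrix.trace (Mᵀ * M) = ∑ j, ∑ i, (M i j)^2 := trace_eq_sum_sq M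
  have htr0 : 0 ≤ Matrix.trace (Mᵀ * M) := by rw [htr]; positivity
  have key : ‖Matrix.toEuclideanCLM (𝕜 := ℝ) M v‖^2 ≤ Matrix.trace (Mᵀ * M) * ‖v‖^2 := by
    rw [norm_sq_coord, norm_sq_coord, htr]
    calc ∑ i, ((Matrix.toEuclideanCLM (𝕜 := ℝ) M v) i)^2
        = ∑ i, (∑ j, M i j * v j)^2 := by simp [clm_apply_coord]
      _ ≤ ∑ i, (∑ j, (M i j)^2) * (∑ j, (v j)^2) := by
          apply Finset.sum_le_sum; intro i _
          exact Finset.sum_mul_sq_le_sq_mul_sq _ _ _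
      _ = (∑ j, ∑ i, (M i j)^2) * ∑ j, (v j)^2 := by
          rw [← Finset.sum_mul]
          congr 1
          exact Finset.sum_comm
  have h1 : ‖Matrix.toEuclideanCLM (𝕜 := ℝ) M v‖
      = Real.sqrt (‖Matrix.toEuclideanCLM (𝕜 := ℝ) M v‖^2) := (Real.sqrt_sq (norm_nonneg _)).symm
  rw [h1, frobNorm]
  have h2 := Real.sqrt_le_sqrt key
  rwa [Real.sqrt_mul htr0, Real.sqrt_sq (norm_nonneg v)] at h2


lemma sc_upper {d : ℕ} {Hf : Vec d → Matrix (Fin d) (Fin d) ℝ} (hsc : SelfConcordant Hf)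
    {xstar y : Vec d} (hlt : localNorm (Hf xstar) (y - xstar) < 1) (v : Vec d) :
    localNorm (Hf y) v ≤ localNorm (Hf xstar) v / (1 - localNorm (Hf xstar) (y - xstar)) := by
  have hs0 : 0 ≤ localNorm (Hf xstar) (y - xstar) := localNorm_nonneg _ _
  have hpos : 0 < 1 - localNorm (Hf xstar) (y - xstar) := by linarith
  rcases eq_or_ne v 0 with rfl | hv
  · simp [localNorm_zero]
  · have h2 := (hsc.2 xstar y v hlt hv).2
    have hb : 0 < localNorm (Hf xstar) v := localNorm_pos (hsc.1 xstar) hv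
    rw [div_le_div_iff₀ hb hpos] at h2
    rw [le_div_iff₀ hpos]
    linarith

lemma grad_min_zero {d : ℕ} {f : Vec d → ℝ} {g : Vec d → Vec d}
    {Hf : Vec d → Matrix (Fin d) (Fin d) ℝ} (hfgH : IsGradHess f g Hf)
    {xstar : Vec d} (hmin : ∀ y, f xstar ≤ f y) : g xstar = 0 := by
  have h1 := hasGradientAt_iff_hasFDerivAt.mp (hfgH.1 xstar)
  have hloc : IsLocalMin f xstar := Filter.Eventually.of_forall hmin
  have h0 := hloc.hasFDerivAt_eq_zero h1
  have h2 := congrArg (fun L => (InnerProductSpace.toDual ℝ (Vec d)).symm L) h0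
  simpa using h2

end AuxQN


/-- **Bound on `‖(B - H_*⁻¹) ∇f(x)‖_*` for self-concordant `f`.** -/
theorem quasi_newton_direction_error_bound
    {d : ℕ} (f : Vec d → ℝ) (g : Vec d → Vec d) (Hf : Vec d → Matrix (Fin d) (Fin d) ℝ)
    (hfgH : IsGradHess f g Hf) (hsc : SelfConcordant Hf)
    (xstar : Vec d) (hmin : ∀ y, f xstar ≤ f y)
    (B : Matrix (Fin d) (Fin d) ℝ) (hB : B.IsSymm)
    (x : Vec d) (hx : localNorm (Hf xstar) (x - xstar) < 1) :
    localNorm (Hf xstar) (Matrix.toEuclideanLin (B - (Hf xstar)⁻¹) (g x)) ≤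
      1 / 2 * wFrob (Hf xstar) (B - (Hf xstar)⁻¹) ^ 2 +
        1 / 2 * (localNorm (Hf xstar) (x - xstar) ^ 2 /
          (1 - localNorm (Hf xstar) (x - xstar)) ^ 2) := by
  have hPD := hsc.1
  set H := Hf xstar with hHdef
  have hHpd : H.PosDef := hPD xstar
  have hpsd := hHpd.posSemidef
  set R := msqrt H with hRdef
  set u := x - xstar with hu
  set r := localNorm H u with hr
  have hr0 : 0 ≤ r := localNorm_nonneg _ _
  have hr1 : r < 1 := hx
  have hRdet : IsUnit R.det := msqrt_isUnit_det hHpd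
  set Q := Matrix.toEuclideanCLM (𝕜 := ℝ) R⁻¹ with hQ
  set ψ := fun t : ℝ => Q (g (xstar + t • u)) with hψ
  -- derivative of ψ
  have hψd : ∀ t : ℝ,
      HasDerivAt ψ (Q ((Matrix.toEuclideanCLM (𝕜 := ℝ) (Hf (xstar + t • u))) u)) t := by
    intro t
    have hγ : HasDerivAt (fun s : ℝ => xstar + s • u) u t := by
      simpa using ((hasDerivAt_id t).smul_const u).const_add xstar
    have hgt := hfgH.2 (xstar + t • u)
    have hcomp := hgt.comp_hasDerivAt t hγ
    exact Q.hasFDerivAt.comp_hasDerivAt t hcomp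
  -- bound on the derivative
  have hb : ∀ t ∈ Set.Icc (0:ℝ) 1,
      ‖Q ((Matrix.toEuclideanCLM (𝕜 := ℝ) (Hf (xstar + t • u))) u)‖ ≤ r / (1 - t*r)^2 := by
    intro t ht
    set y := xstar + t • u with hy
    have hyx : y - xstar = t • u := by rw [hy]; abel
    have hs : localNorm H (y - xstar) = t * r := by
      rw [hyx, localNorm_smul hpsd, abs_of_nonneg ht.1, hr]
    have htr1 : t * r ≤ r := mul_le_of_le_one_left hr0 ht.2
    have htr : t * r < 1 := lt_of_le_of_lt htr1 hr1
    have hpos : 0 < 1 - t*r := by linarith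
    have hlt : localNorm H (y - xstar) < 1 := by rw [hs]; exact htr
    have h1 : localNorm (Hf y) u ≤ r / (1 - t*r) := by
      have h := sc_upper hsc hlt u
      rwa [hs, ← hr] at h
    apply norm_le_of_inner_le (by positivity)
    intro z
    have hsym : ⟪Q ((Matrix.toEuclideanCLM (𝕜 := ℝ) (Hf y)) u), z⟫_ℝ
        = ⟪(Matrix.toEuclideanCLM (𝕜 := ℝ) (Hf y)) u, Q z⟫_ℝ :=
      clm_inner_symm ((msqrt_isHermitian hpsd).inv) _ _
    have hCS := inner_H_CS (hPD y).posSemidef u (Q z)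
    have hQz : localNorm H (Q z) = ‖z‖ := by
      rw [localNorm_eq_norm hpsd, hQ, ← clm_mul, Matrix.mul_nonsing_inv _ hRdet,
        _root_.map_one, ContinuousLinearMap.one_apply]
    have h2 : localNorm (Hf y) (Q z) ≤ ‖z‖ / (1 - t*r) := by
      have h := sc_upper hsc hlt (Q z)
      rwa [hs, hQz] at h
    have h3 : localNorm (Hf y) u * localNorm (Hf y) (Q z)
        ≤ (r / (1 - t*r)) * (‖z‖ / (1 - t*r)) :=
      mul_le_mul h1 h2 (localNorm_nonneg _ _) (by positivity)
    have h4 : (r / (1 - t*r)) * (‖z‖ / (1 - t*r)) = r / (1 - t*r)^2 * ‖z‖ := by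
      rw [div_mul_div_comm, div_mul_eq_mul_div, pow_two]
    rw [hsym]
    calc ⟪(Matrix.toEuclideanCLM (𝕜 := ℝ) (Hf y)) u, Q z⟫_ℝ
        ≤ localNorm (Hf y) u * localNorm (Hf y) (Q z) := hCS
      _ ≤ (r / (1 - t*r)) * (‖z‖ / (1 - t*r)) := h3
      _ = r / (1 - t*r)^2 * ‖z‖ := h4
  -- the boundary function
  set Bf := fun t : ℝ => r * t * (1 - t*r)⁻¹ with hBf
  have hB' : ∀ t ∈ Set.Icc (0:ℝ) 1, HasDerivAt Bf (r / (1 - t*r)^2) t := by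
    intro t ht
    have htr1 : t * r ≤ r := mul_le_of_le_one_left hr0 ht.2
    have hpos : 0 < 1 - t*r := by linarith
    have h1 : HasDerivAt (fun s : ℝ => r * s) r t := by
      simpa using (hasDerivAt_id t).const_mul r
    have h2 : HasDerivAt (fun s : ℝ => 1 - s*r) (-r) t := by
      simpa using ((hasDerivAt_id t).mul_const r).const_sub 1
    have h3 := h2.inv (ne_of_gt hpos)
    have h4 : HasDerivAt (fun s => r * s * (1 - s*r)⁻¹) _ t := h1.mul h3
    convert h4 using 1
    have hne := hpos.ne'
    field_simp
    ring
  have hψ1 : ‖ψ 1‖ ≤ r / (1 - r) := by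
    have hg0 : g xstar = 0 := grad_min_zero hfgH hmin
    have h0 : ‖ψ 0‖ ≤ Bf 0 := by simp [hψ, hBf, hg0]
    have hcont : ContinuousOn Bf (Set.Icc 0 1) :=
      fun t ht => (hB' t ht).continuousAt.continuousWithinAt
    have hψcont : ContinuousOn ψ (Set.Icc 0 1) :=
      fun t _ => (hψd t).continuousAt.continuousWithinAt
    have hres := image_norm_le_of_norm_deriv_right_le_deriv_boundary' hψcont
      (fun t ht => (hψd t).hasDerivWithinAt) h0 hcont
      (fun t ht => (hB' t (Set.Ico_subset_Icc_self ht)).hasDerivWithinAt)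
      (fun t ht => hb t (Set.Ico_subset_Icc_self ht))
    have h1 := hres (Set.right_mem_Icc.mpr zero_le_one)
    rw [hBf] at h1
    simpa [div_eq_mul_inv] using h1
  -- assembling
  set W := B - H⁻¹ with hW
  have hψ1x : ψ 1 = Q (g x) := by
    have hxx : xstar + (1:ℝ) • u = x := by rw [one_smul, hu]; abel
    simp only [hψ]
    rw [hxx]
  have hmain : localNorm H (Matrix.toEuclideanLin W (g x)) ≤ wFrob H W * (r/(1-r)) := by
    rw [localNorm_eq_norm hpsd, ← clm_apply_eq_lin]
    have key : (Matrix.toEuclideanCLM (𝕜 := ℝ) R) ((Matrix.toEuclideanCLM (𝕜 := ℝ) W) (g x))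
        = (Matrix.toEuclideanCLM (𝕜 := ℝ) (R * W * R)) (Q (g x)) := by
      rw [hQ, ← clm_mul, ← clm_mul, Matrix.mul_assoc (R * W),
        Matrix.mul_nonsing_inv _ hRdet, Matrix.mul_one]
    show ‖(Matrix.toEuclideanCLM (𝕜 := ℝ) R) ((Matrix.toEuclideanCLM (𝕜 := ℝ) W) (g x))‖ ≤ _
    rw [key]
    calc ‖(Matrix.toEuclideanCLM (𝕜 := ℝ) (R * W * R)) (Q (g x))‖
        ≤ frobNorm (R * W * R) * ‖Q (g x)‖ := clm_apply_norm_le_frob _ _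
      _ ≤ frobNorm (R * W * R) * (r/(1-r)) := by
          apply mul_le_mul_of_nonneg_left _ (Real.sqrt_nonneg _)
          rw [← hψ1x]; exact hψ1
      _ = wFrob H W * (r/(1-r)) := rfl
  have ha : 0 ≤ wFrob H W := Real.sqrt_nonneg _
  have hq0 : 0 ≤ r / (1-r) := div_nonneg hr0 (by linarith)
  have hq2 : (r/(1-r))^2 = r^2/(1-r)^2 := div_pow r (1-r) 2
  nlinarith [sq_nonneg (wFrob H W - r/(1-r)), hmain, ha, hq0, hq2]
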